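/- For every integer t ≥ 1, the number M_a(t) of 3×3 magic squares with positive integer entries and magic sum t satisfies M_a(t) = Σ R_ma(s), where the sum is over all integers s with 0 < s < t and s ≡ t (mod 3), and R_ma(s) is the number of reduced 3×3 magic squares with magic sum s. -/

import Mathlib

/-- A 3×3 magic square with magic sum `s`: all nine entries distinct, all row
sums, column sums, the main diagonal sum and the antidiagonal sum equal `s`. -/
def IsMagicSqSum (x : Matrix (Fin 3) (Fin 3) ℤ) (s : ℤ) : Prop :=
  (Function.Injective fun p : Fin 3 × Fin 3 => x p.1 p.2) ∧
  (∀ i, ∑ j, x i j = s) ∧ (∀ j, ∑ i, x i j = s) ∧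
  x 0 0 + x 1 1 + x 2 2 = s ∧ x 0 2 + x 1 1 + x 2 0 = s

/-- `Ma t` = number of 3×3 magic squares with positive entries and magic sum t. -/
noncomputable def Ma (t : ℕ) : ℕ :=
  {x : Matrix (Fin 3) (Fin 3) ℤ |
    IsMagicSqSum x (t : ℤ) ∧ ∀ i j, 0 < x i j}.ncard

/-- `Rma s` = number of reduced 3×3 magic squares (nonnegative entries, minimum
entry 0) whose magic sum equals s. -/
noncomputable def Rma (s : ℕ) : ℕ :=
  {x : Matrix (Fin 3) (Fin 3) ℤ |
    IsMagicSqSum x (s : ℤ) ∧ (∀ i j, 0 ≤ x i j) ∧ (∃ i j, x i j = 0)}.ncard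

lemma magic_shift (x : Matrix (Fin 3) (Fin 3) ℤ) (s m : ℤ) (h : IsMagicSqSum x s) :
    IsMagicSqSum (fun i j => x i j + m) (s + 3 * m) := by
  obtain ⟨hinj, hrow, hcol, hd, ha⟩ := h
  refine ⟨?_, ?_, ?_, by simp only []; linarith, by simp only []; linarith⟩
  · intro p q hpq
    simp only [] at hpq
    exact hinj (by linarith)
  · intro i
    have := hrow i
    simp only [Fin.sum_univ_three] at this ⊢
    linarith
  · intro j
    have := hcol j
    simp only [Fin.sum_univ_three] at this ⊢
    linarith

lemma reduced_pos (x : Matrix (Fin 3) (Fin 3) ℤ) (s : ℤ) (h : IsMagicSqSum x s)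
    (hnn : ∀ i j, 0 ≤ x i j) : 1 ≤ s := by
  by_contra hs
  push_neg at hs
  have h0 := h.2.1 0
  simp only [Fin.sum_univ_three] at h0
  have a00 := hnn 0 0
  have a01 := hnn 0 1
  have a02 := hnn 0 2
  have e1 : x 0 0 = x 0 1 := by omega
  have h01 : ((0,0) : Fin 3 × Fin 3) = (0,1) := h.1 e1
  have := congrArg Prod.snd h01
  simp at this

lemma ncard_biUnion' {α β : Type*} (S : Finset β) (f : β → Set α)
    (hfin : ∀ b ∈ S, (f b).Finite)
    (hdisj : ∀ b ∈ S, ∀ c ∈ S, b ≠ c → Disjoint (f b) (f c)) :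
    (⋃ b ∈ S, f b).ncard = ∑ b ∈ S, (f b).ncard := by
  classical
  induction S using Finset.induction with
  | empty => simp
  | @insert a s ha ih =>
    rw [Finset.sum_insert ha]
    have hU : (⋃ b ∈ insert a s, f b) = f a ∪ ⋃ b ∈ s, f b := by
      simp
    rw [hU]
    have hfins : (⋃ b ∈ s, f b).Finite :=
      Set.Finite.biUnion s.finite_toSet (fun b hb => hfin b (Finset.mem_insert_of_mem hb))
    have hdis : Disjoint (f a) (⋃ b ∈ s, f b) := by
      rw [Set.disjoint_iUnion_right]
      intro b
      rw [Set.disjoint_iUnion_right]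
      intro hb
      exact hdisj a (Finset.mem_insert_self a s) b (Finset.mem_insert_of_mem hb)
        (fun h => ha (h ▸ hb))
    rw [Set.ncard_union_eq hdis (hfin a (Finset.mem_insert_self a s)) hfins,
      ih (fun b hb => hfin b (Finset.mem_insert_of_mem hb))
        (fun b hb c hc => hdisj b (Finset.mem_insert_of_mem hb) c (Finset.mem_insert_of_mem hc))]

theorem magic_affine_via_reduced (t : ℕ) (ht : 1 ≤ t) :
    Ma t = ∑ s ∈ (Finset.Ioo 0 t).filter (fun s => s % 3 = t % 3), Rma s := by
  classical
  set S := (Finset.Ioo 0 t).filter (fun s => s % 3 = t % 3) with hS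
  set B : ℕ → Set (Matrix (Fin 3) (Fin 3) ℤ) := fun s =>
    {x | IsMagicSqSum x (s : ℤ) ∧ (∀ i j, 0 ≤ x i j) ∧ (∃ i j, x i j = 0)} with hB
  -- finiteness of B s
  have hBfin : ∀ s : ℕ, (B s).Finite := by
    intro s
    have hsub : B s ⊆ Set.pi Set.univ (fun _ : Fin 3 =>
        Set.pi Set.univ (fun _ : Fin 3 => Set.Icc (0:ℤ) s)) := by
      intro x hx
      obtain ⟨hm, hnn, -⟩ := hx
      intro i _
      intro j _
      refine ⟨hnn i j, ?_⟩
      have hle : x i j ≤ ∑ j', x i j' :=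
        Finset.single_le_sum (fun k _ => hnn i k) (Finset.mem_univ j)
      rw [hm.2.1 i] at hle
      exact hle
    exact Set.Finite.subset (Set.Finite.pi (fun _ => Set.Finite.pi
      (fun _ => Set.finite_Icc (0:ℤ) s))) hsub
  -- shift function
  set sh : ℕ → Matrix (Fin 3) (Fin 3) ℤ → Matrix (Fin 3) (Fin 3) ℤ := fun s x =>
    fun i j => x i j + ((t - s) / 3 : ℕ) with hsh
  have key : {x : Matrix (Fin 3) (Fin 3) ℤ | IsMagicSqSum x (t : ℤ) ∧ ∀ i j, 0 < x i j}
      = ⋃ s ∈ S, sh s '' B s := by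
    ext y
    simp only [Set.mem_setOf_eq, Set.mem_iUnion, Set.mem_image]
    constructor
    · rintro ⟨hm, hpos⟩
      -- minimum entry
      set m : ℤ := Finset.univ.inf' ⟨((0:Fin 3),(0:Fin 3)), Finset.mem_univ _⟩
        (fun p : Fin 3 × Fin 3 => y p.1 p.2) with hm_def
      have hm_le : ∀ i j, m ≤ y i j := fun i j =>
        Finset.inf'_le _ (Finset.mem_univ (i, j))
      obtain ⟨p, -, hp⟩ := Finset.exists_mem_eq_inf' (⟨((0:Fin 3),(0:Fin 3)), Finset.mem_univ _⟩ :
        Finset.univ.Nonempty) (fun p : Fin 3 × Fin 3 => y p.1 p.2)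
      have hm1 : 1 ≤ m := by
        rw [hm_def]
        exact Finset.le_inf' _ _ (fun p _ => hpos p.1 p.2)
      set x : Matrix (Fin 3) (Fin 3) ℤ := fun i j => y i j - m with hx
      have hxm : IsMagicSqSum x ((t : ℤ) + 3 * (-m)) := by
        have := magic_shift y t (-m) hm
        have e : x = fun i j => y i j + -m := by
          funext i j; simp only [hx]; ring
        rw [e]; exact this
      have hxnn : ∀ i j, 0 ≤ x i j := fun i j => by
        simp only [hx]; linarith [hm_le i j]
      have hxz : ∃ i j, x i j = 0 := ⟨p.1, p.2, by simp [hx, ← hp]; exact sub_eq_zero.mpr hm_def.symm⟩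
      have hs1 : 1 ≤ (t : ℤ) + 3 * (-m) := reduced_pos x _ hxm hxnn
      set k : ℕ := m.toNat with hk
      have hmk : (k : ℤ) = m := Int.toNat_of_nonneg (by linarith)
      have hk1 : 1 ≤ k := by omega
      have h3k : 3 * k < t := by omega
      refine ⟨t - 3 * k, ?_, x, ⟨?_, hxnn, hxz⟩, ?_⟩
      · simp only [hS, Finset.mem_filter, Finset.mem_Ioo]
        omega
      · have : ((t - 3*k : ℕ) : ℤ) = (t : ℤ) + 3 * (-m) := by push_cast [h3k.le]; omega
        rw [this]; exact hxm
      · funext i j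
        simp only [hsh, hx]
        have h' : (t - (t - 3*k)) / 3 = k := by omega
        rw [h', hmk]
        ring
    · rintro ⟨s, hsS, x, ⟨hxm, hxnn, hxz⟩, rfl⟩
      simp only [hS, Finset.mem_filter, Finset.mem_Ioo] at hsS
      have h3 : 3 ∣ t - s := by omega
      set k : ℕ := (t - s) / 3 with hk
      have hks : s + 3 * k = t := by omega
      have hk1 : 1 ≤ k := by omega
      constructor
      · have := magic_shift x s k hxm
        have hcast : (s : ℤ) + 3 * (k : ℤ) = (t : ℤ) := by omega
        rw [hcast] at this
        exact this
      · intro i j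
        have h1 := hxnn i j
        have h2 : (1:ℤ) ≤ (k:ℤ) := by exact_mod_cast hk1
        show 0 < x i j + ((t - s) / 3 : ℕ)
        rw [← hk]
        linarith
  -- disjointness
  have hdisj : ∀ a ∈ S, ∀ b ∈ S, a ≠ b → Disjoint (sh a '' B a) (sh b '' B b) := by
    intro a ha b hb hab
    rw [Set.disjoint_left]
    rintro y ⟨x, ⟨-, hxnn, i0, j0, hx0⟩, rfl⟩ ⟨x', ⟨-, hxnn', hz'⟩, he⟩
    -- the min entry of y determines the shift
    have hmin : ∀ (z : Matrix (Fin 3) (Fin 3) ℤ) (c : ℤ), (∀ i j, 0 ≤ z i j) →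
        (∃ i j, z i j = 0) →
        Finset.univ.inf' ⟨((0:Fin 3),(0:Fin 3)), Finset.mem_univ _⟩
          (fun p : Fin 3 × Fin 3 => z p.1 p.2 + c) = c := by
      rintro z c hnn ⟨i, j, hij⟩
      apply le_antisymm
      · have := Finset.inf'_le (b := ((i,j) : Fin 3 × Fin 3))
          (f := fun p : Fin 3 × Fin 3 => z p.1 p.2 + c) (Finset.mem_univ _)
        simpa [hij] using this
      · exact Finset.le_inf' _ _ (fun p _ => by have := hnn p.1 p.2; linarith)
    have h1 := hmin x (((t - a) / 3 : ℕ) : ℤ) hxnn ⟨i0, j0, hx0⟩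
    have h2 := hmin x' (((t - b) / 3 : ℕ) : ℤ) hxnn' hz'
    have he' : (fun p : Fin 3 × Fin 3 => x p.1 p.2 + (((t - a) / 3 : ℕ) : ℤ))
        = (fun p : Fin 3 × Fin 3 => x' p.1 p.2 + (((t - b) / 3 : ℕ) : ℤ)) := by
      funext p
      have h3 := congrFun (congrFun he p.1) p.2
      simp only [hsh] at h3
      linarith
    rw [he'] at h1
    have h2 := h1.symm.trans h2
    simp only [hS, Finset.mem_filter, Finset.mem_Ioo] at ha hb
    have : (t - a) / 3 = (t - b) / 3 := by exact_mod_cast h2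
    omega
  rw [Ma, key, ncard_biUnion' S _ (fun b _ => (hBfin b).image _) hdisj]
  apply Finset.sum_congr rfl
  intro s hs
  rw [Rma]
  apply Set.ncard_image_of_injective
  intro u v huv
  funext i j
  have := congrFun (congrFun huv i) j
  simp only [hsh] at this
  linarith
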